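/- Under the family elliptical potential setting, suppose additionally that β ≥ 0 and that for every i ∈ I and every m, a real number δ^i_m satisfies |δ^i_m| ≤ β · ‖c^i_m‖_{(V^i_m)⁻¹}. Then Σ_{i∈I} Σ_{m=1}^{M_i} n^i_m · δ^i_m ≤ β · √(2·d·|I|·T·log(1 + T/(λ·d))). -/

import Mathlib

open Matrix Finset

lemma aux_log_lb {u : ℝ} (hu0 : 0 ≤ u) (hu1 : u ≤ 1) : u ≤ 2 * Real.log (1 + u) := by
  have h1 : (0:ℝ) < 1 + u := by linarith
  have h2 := Real.log_le_sub_one_of_pos (inv_pos.2 h1)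
  rw [Real.log_inv] at h2
  have h3 : (1 + u) * (1 + u)⁻¹ = 1 := mul_inv_cancel₀ (ne_of_gt h1)
  nlinarith [h2, h3]

lemma aux_psd_vecMulVec {d : ℕ} (c : Fin d → ℝ) : (vecMulVec c c).PosSemidef := by
  rw [posSemidef_iff_dotProduct_mulVec]
  constructor
  · ext i j
    simp [conjTranspose_apply, vecMulVec_apply, mul_comm]
  · intro x
    have h : vecMulVec c c *ᵥ x = (c ⬝ᵥ x) • c := by
      ext i
      simp only [vecMulVec_apply, mulVec, dotProduct, Pi.smul_apply, smul_eq_mul, Finset.sum_mul, Finset.mul_sum]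
      exact Finset.sum_congr rfl fun k _ => by ring
    rw [h]
    have : star x ⬝ᵥ ((c ⬝ᵥ x) • c) = (c ⬝ᵥ x) * (c ⬝ᵥ x) := by
      simp [dotProduct_smul, dotProduct_comm, star_trivial]
    rw [this]
    exact mul_self_nonneg _

lemma aux_psd_smul {d : ℕ} {A : Matrix (Fin d) (Fin d) ℝ} (hA : A.PosSemidef) {r : ℝ}
    (hr : 0 ≤ r) : (r • A).PosSemidef := by
  refine posSemidef_iff_dotProduct_mulVec.mpr ⟨?_, fun x => ?_⟩
  · unfold Matrix.IsHermitian
    rw [conjTranspose_smul, hA.1]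
    simp
  · rw [smul_mulVec, dotProduct_smul]
    exact mul_nonneg hr (hA.dotProduct_mulVec_nonneg x)

lemma aux_trace_eq_sum_eigen {d : ℕ} {A : Matrix (Fin d) (Fin d) ℝ} (hA : A.IsHermitian) :
    A.trace = ∑ i, hA.eigenvalues i := by
  simpa using hA.trace_eq_sum_eigenvalues

lemma aux_det_le_pow {d : ℕ} (hd : 0 < d) {A : Matrix (Fin d) (Fin d) ℝ} (hA : A.PosSemidef) :
    A.det ≤ (A.trace / d) ^ d := by
  have he : ∀ i, 0 ≤ hA.1.eigenvalues i := hA.eigenvalues_nonneg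
  have hdet : A.det = ∏ i, hA.1.eigenvalues i := by
    simpa using hA.1.det_eq_prod_eigenvalues
  have htr : A.trace = ∑ i, hA.1.eigenvalues i := by
    simpa using hA.1.trace_eq_sum_eigenvalues
  have hd' : (0:ℝ) < d := by exact_mod_cast hd
  have hgm := Real.geom_mean_le_arith_mean_weighted Finset.univ (fun _ => (d:ℝ)⁻¹)
    hA.1.eigenvalues (fun _ _ => by positivity)
    (by simp [Finset.card_univ]; field_simp) (fun i _ => he i)
  have hsum : ∑ i, (d:ℝ)⁻¹ * hA.1.eigenvalues i = A.trace / d := by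
    rw [htr, ← Finset.mul_sum]; ring
  rw [hsum] at hgm
  have hL : (0:ℝ) ≤ ∏ i, hA.1.eigenvalues i ^ ((d:ℝ)⁻¹) :=
    Finset.prod_nonneg fun i _ => Real.rpow_nonneg (he i) _
  have hpow := pow_le_pow_left₀ hL hgm d
  have hLpow : (∏ i, hA.1.eigenvalues i ^ ((d:ℝ)⁻¹)) ^ d = ∏ i, hA.1.eigenvalues i := by
    rw [← Finset.prod_pow]
    refine Finset.prod_congr rfl fun i _ => ?_
    rw [← Real.rpow_natCast (hA.1.eigenvalues i ^ ((d:ℝ)⁻¹)) d, ← Real.rpow_mul (he i),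
      inv_mul_cancel₀ (ne_of_gt hd'), Real.rpow_one]
  rw [hLpow] at hpow
  rw [hdet]; exact hpow

lemma aux_det_update {d : ℕ} {A : Matrix (Fin d) (Fin d) ℝ} (hA : A.PosDef) (r : ℝ)
    (c : Fin d → ℝ) :
    (A + r • vecMulVec c c).det = A.det * (1 + r * (c ⬝ᵥ A⁻¹.mulVec c)) := by
  have h1 : r • vecMulVec c c = vecMulVec (r • c) c := by
    ext i j; simp [vecMulVec_apply, mul_assoc]
  have hu : IsUnit A.det := isUnit_iff_ne_zero.mpr (ne_of_gt hA.det_pos)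
  rw [h1, vecMulVec_eq Unit, det_add_replicateCol_mul_replicateRow hu]
  congr 1
  rw [← replicateRow_vecMul, det_unique]
  simp only [Matrix.add_apply, one_apply_eq, replicateRow_mul_replicateCol_apply, dotProduct_smul, smul_eq_mul]
  rw [← dotProduct_mulVec]


/-- Family elliptical potential lemma with errors: if `|δ^i_m| ≤ β ‖c^i_m‖_{(V^i_m)⁻¹}`, then
`∑_{i∈I} ∑_{m=1}^{M_i} n^i_m δ^i_m ≤ β √(2 d |I| T log (1 + T/(λ d)))`. -/
theorem family_elliptical_potential_errors {ι : Type*} [Fintype ι] [Nonempty ι]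
    {d : ℕ} (hd : 1 ≤ d) (lam : ℝ) (hlam : 1 ≤ lam)
    (M : ι → ℕ) (c : ι → ℕ → Fin d → ℝ) (n : ι → ℕ → ℕ)
    (V : ι → ℕ → Matrix (Fin d) (Fin d) ℝ)
    (hc : ∀ i m, 1 ≤ m → m ≤ M i → Real.sqrt (∑ k, c i m k ^ 2) ≤ 1)
    (hV1 : ∀ i, V i 1 = lam • (1 : Matrix (Fin d) (Fin d) ℝ))
    (hVrec : ∀ i m, 1 ≤ m → m ≤ M i →
      V i (m + 1) = V i m + (n i m : ℝ) • vecMulVec (c i m) (c i m))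
    (hsmall : ∀ i m, 1 ≤ m → m ≤ M i →
      (n i m : ℝ) * (c i m ⬝ᵥ (V i m)⁻¹.mulVec (c i m)) ≤ 1)
    (T : ℝ) (hT : T = ∑ i, ∑ m ∈ Finset.Icc 1 (M i), (n i m : ℝ))
    (β : ℝ) (hβ : 0 ≤ β) (δ' : ι → ℕ → ℝ)
    (hδ' : ∀ i m, 1 ≤ m → m ≤ M i →
      |δ' i m| ≤ β * Real.sqrt (c i m ⬝ᵥ (V i m)⁻¹.mulVec (c i m))) :
    ∑ i, ∑ m ∈ Finset.Icc 1 (M i), (n i m : ℝ) * δ' i m ≤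
      β * Real.sqrt (2 * d * (Fintype.card ι) * T * Real.log (1 + T / (lam * d))) := by
  have hd' : (0:ℝ) < d := by exact_mod_cast hd
  have hlam0 : (0:ℝ) < lam := by linarith
  set x : ι → ℕ → ℝ := fun i m => c i m ⬝ᵥ (V i m)⁻¹.mulVec (c i m) with hx
  -- positive definiteness
  have PD : ∀ i m, 1 ≤ m → m ≤ M i + 1 → (V i m).PosDef := by
    intro i m
    induction m with
    | zero => intro h; omega
    | succ m ih =>
      intro h1 h2
      rcases Nat.eq_zero_or_pos m with hm | hm
      · subst hm
        rw [hV1 i, smul_one_eq_diagonal]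
        exact posDef_diagonal_iff.mpr (fun _ => hlam0)
      · have hmM : m ≤ M i := by omega
        rw [hVrec i m hm hmM]
        exact (ih hm (by omega)).add_posSemidef
          (aux_psd_smul (aux_psd_vecMulVec _) (by positivity))
  have xnn : ∀ i m, 1 ≤ m → m ≤ M i → 0 ≤ x i m := by
    intro i m h1 h2
    have h := ((PD i m h1 (le_trans h2 (Nat.le_succ _))).inv.posSemidef).dotProduct_mulVec_nonneg (c i m)
    simpa [hx] using h
  have hcsq : ∀ i m, 1 ≤ m → m ≤ M i → ∑ k, c i m k ^ 2 ≤ 1 := by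
    intro i m h1 h2
    have h := hc i m h1 h2
    have hnn : (0:ℝ) ≤ ∑ k, c i m k ^ 2 := by positivity
    nlinarith [Real.sq_sqrt hnn, Real.sqrt_nonneg (∑ k, c i m k ^ 2)]
  -- trace bound
  have trace_bd : ∀ i N, N ≤ M i →
      (V i (N+1)).trace ≤ lam * d + ∑ m ∈ Icc 1 N, (n i m : ℝ) := by
    intro i N
    induction N with
    | zero =>
      intro _
      rw [hV1 i, trace_smul, trace_one]
      simp
    | succ N ih =>
      intro h
      rw [hVrec i (N+1) (by omega) h, trace_add, trace_smul]
      have htr : (vecMulVec (c i (N+1)) (c i (N+1))).trace = ∑ k, c i (N+1) k ^ 2 := by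
        simp [Matrix.trace, Matrix.diag, vecMulVec_apply, sq]
      rw [htr, Finset.sum_Icc_succ_top (by omega : 1 ≤ N + 1)]
      have h1 := ih (by omega)
      have h2 : (n i (N+1) : ℝ) • (∑ k, c i (N+1) k ^ 2) ≤ (n i (N+1) : ℝ) := by
        rw [smul_eq_mul]
        calc (n i (N+1) : ℝ) * (∑ k, c i (N+1) k ^ 2) ≤ (n i (N+1) : ℝ) * 1 :=
          mul_le_mul_of_nonneg_left (hcsq i (N+1) (by omega) h) (by positivity)
        _ = _ := mul_one _
      linarith
  -- log det telescoping bound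
  have key : ∀ i N, N ≤ M i → ∑ m ∈ Icc 1 N, (n i m : ℝ) * x i m ≤
      2 * (Real.log (V i (N+1)).det - d * Real.log lam) := by
    intro i N
    induction N with
    | zero =>
      intro _
      have : (V i 1).det = lam ^ d := by
        rw [hV1 i, det_smul, det_one, mul_one]
        simp
      rw [this, Real.log_pow]
      simp
    | succ N ih =>
      intro h
      have h1 : (1:ℕ) ≤ N + 1 := by omega
      have hPD := PD i (N+1) h1 (by omega)
      have hdet : (V i (N+2)).det = (V i (N+1)).det * (1 + (n i (N+1) : ℝ) * x i (N+1)) := by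
        rw [hVrec i (N+1) h1 h]
        exact aux_det_update hPD _ _
      have hxnn := xnn i (N+1) h1 h
      have hu0 : (0:ℝ) ≤ (n i (N+1) : ℝ) * x i (N+1) := by positivity
      have hu1 := hsmall i (N+1) h1 h
      have hlog : Real.log (V i (N+2)).det =
          Real.log (V i (N+1)).det + Real.log (1 + (n i (N+1) : ℝ) * x i (N+1)) := by
        rw [hdet, Real.log_mul (ne_of_gt hPD.det_pos) (by positivity)]
      have hstep := aux_log_lb hu0 hu1
      rw [Finset.sum_Icc_succ_top h1]
      have := ih (by omega)
      rw [show N + 1 + 1 = N + 2 from rfl] at hlog ⊢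
      linarith
  set L : ℝ := Real.log (1 + T / (lam * d)) with hL
  set τ : ι → ℝ := fun i => ∑ m ∈ Icc 1 (M i), (n i m : ℝ) with hτ
  have τnn : ∀ i, 0 ≤ τ i := fun i => Finset.sum_nonneg (fun m _ => by positivity)
  have hT0 : 0 ≤ T := hT ▸ Finset.sum_nonneg (fun i _ => τnn i)
  have τleT : ∀ i, τ i ≤ T := by
    intro i
    rw [hT]
    exact Finset.single_le_sum (f := fun j => τ j) (fun j _ => τnn j) (Finset.mem_univ i)
  have hLnn : 0 ≤ L := by
    have h0 : (0:ℝ) ≤ T / (lam * d) := by positivity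
    exact Real.log_nonneg (by linarith)
  -- per-i bound
  have Si : ∀ i, ∑ m ∈ Icc 1 (M i), (n i m : ℝ) * x i m ≤ 2 * d * L := by
    intro i
    have h1 := key i (M i) le_rfl
    have hPD := PD i (M i + 1) (by omega) le_rfl
    have htr := trace_bd i (M i) le_rfl
    have htrnn : 0 ≤ (V i (M i + 1)).trace := by
      rw [aux_trace_eq_sum_eigen hPD.posSemidef.1]
      exact Finset.sum_nonneg fun k _ => hPD.posSemidef.eigenvalues_nonneg k
    have hdet_le : (V i (M i + 1)).det ≤ ((lam * d + τ i) / d) ^ d := by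
      calc (V i (M i + 1)).det ≤ ((V i (M i + 1)).trace / d) ^ d :=
            aux_det_le_pow hd hPD.posSemidef
        _ ≤ ((lam * d + τ i) / d) ^ d := by
            apply pow_le_pow_left₀ (by positivity)
            gcongr
    have hdp : (0:ℝ) < (lam * d + τ i) / d := by positivity
    have hlog_le : Real.log (V i (M i + 1)).det ≤ d * Real.log ((lam * d + τ i) / d) := by
      calc Real.log (V i (M i + 1)).det ≤ Real.log (((lam * d + τ i) / d) ^ d) :=
            Real.log_le_log hPD.det_pos hdet_le
        _ = d * Real.log ((lam * d + τ i) / d) := by rw [Real.log_pow]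
    have hsplit : (lam * d + τ i) / d = lam * (1 + τ i / (lam * d)) := by
      field_simp
    have hlog_eq : Real.log ((lam * d + τ i) / d) =
        Real.log lam + Real.log (1 + τ i / (lam * d)) := by
      rw [hsplit, Real.log_mul (ne_of_gt hlam0) (by positivity)]
    have hmono : Real.log (1 + τ i / (lam * d)) ≤ L := by
      rw [hL]
      apply Real.log_le_log (by positivity)
      have : τ i / (lam * d) ≤ T / (lam * d) := by gcongr; exact τleT i
      linarith
    have hd0 : (0:ℝ) ≤ d := le_of_lt hd'
    nlinarith [mul_le_mul_of_nonneg_left hmono hd0]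
  -- final assembly
  set P : ℝ := ∑ i, ∑ m ∈ Icc 1 (M i), (n i m : ℝ) * Real.sqrt (x i m) with hP
  have step1 : ∑ i, ∑ m ∈ Finset.Icc 1 (M i), (n i m : ℝ) * δ' i m ≤ β * P := by
    have h1 : ∑ i, ∑ m ∈ Finset.Icc 1 (M i), (n i m : ℝ) * δ' i m ≤
        ∑ i, ∑ m ∈ Icc 1 (M i), (n i m : ℝ) * (β * Real.sqrt (x i m)) := by
      apply Finset.sum_le_sum
      intro i _
      apply Finset.sum_le_sum
      intro m hm
      rw [Finset.mem_Icc] at hm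
      exact mul_le_mul_of_nonneg_left
        (le_trans (le_abs_self _) (hδ' i m hm.1 hm.2)) (by positivity)
    have h2 : ∑ i, ∑ m ∈ Icc 1 (M i), (n i m : ℝ) * (β * Real.sqrt (x i m)) = β * P := by
      rw [hP, Finset.mul_sum]
      refine Finset.sum_congr rfl fun i _ => ?_
      rw [Finset.mul_sum]
      exact Finset.sum_congr rfl fun m _ => by ring
    linarith
  have Pnn : 0 ≤ P := by
    apply Finset.sum_nonneg; intro i _
    apply Finset.sum_nonneg; intro m _
    positivity
  set s : Finset ((_ : ι) × ℕ) := Finset.univ.sigma (fun i => Icc 1 (M i)) with hs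
  have hmem : ∀ p : (_ : ι) × ℕ, p ∈ s → 1 ≤ p.2 ∧ p.2 ≤ M p.1 := by
    intro p hp
    rw [hs, Finset.mem_sigma, Finset.mem_Icc] at hp
    exact hp.2
  have hCS := Finset.sum_sq_le_sum_mul_sum_of_sq_eq_mul s
    (r := fun p => (n p.1 p.2 : ℝ) * Real.sqrt (x p.1 p.2))
    (f := fun p => (n p.1 p.2 : ℝ))
    (g := fun p => (n p.1 p.2 : ℝ) * x p.1 p.2)
    (fun p _ => by positivity)
    (fun p hp => mul_nonneg (by positivity) (xnn p.1 p.2 (hmem p hp).1 (hmem p hp).2))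
    (fun p hp => by
      have hxp := xnn p.1 p.2 (hmem p hp).1 (hmem p hp).2
      rw [mul_pow, Real.sq_sqrt hxp]
      ring)
  rw [← Finset.sum_sigma' Finset.univ _ (fun i m => (n i m : ℝ) * Real.sqrt (x i m)),
    ← Finset.sum_sigma' Finset.univ _ (fun i m => (n i m : ℝ)),
    ← Finset.sum_sigma' Finset.univ _ (fun i m => (n i m : ℝ) * x i m)] at hCS
  have hB : ∑ i, ∑ m ∈ Icc 1 (M i), (n i m : ℝ) * x i m ≤ (Fintype.card ι : ℝ) * (2 * d * L) := by
    calc ∑ i, ∑ m ∈ Icc 1 (M i), (n i m : ℝ) * x i m ≤ ∑ _i : ι, 2 * d * L :=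
          Finset.sum_le_sum fun i _ => Si i
      _ = (Fintype.card ι : ℝ) * (2 * d * L) := by
          rw [Finset.sum_const, Finset.card_univ, nsmul_eq_mul]
  have hBnn : (0:ℝ) ≤ (Fintype.card ι : ℝ) * (2 * d * L) := by positivity
  have hP2 : P ^ 2 ≤ 2 * d * (Fintype.card ι) * T * L := by
    calc P ^ 2 ≤ T * ((Fintype.card ι : ℝ) * (2 * d * L)) := by
          rw [hT]
          exact le_trans hCS (mul_le_mul_of_nonneg_left hB (hT ▸ hT0))
      _ = 2 * d * (Fintype.card ι) * T * L := by ring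
  have hPle : P ≤ Real.sqrt (2 * d * (Fintype.card ι) * T * L) := by
    rw [← Real.sqrt_sq Pnn]
    exact Real.sqrt_le_sqrt hP2
  calc ∑ i, ∑ m ∈ Finset.Icc 1 (M i), (n i m : ℝ) * δ' i m ≤ β * P := step1
    _ ≤ β * Real.sqrt (2 * d * (Fintype.card ι) * T * L) :=
        mul_le_mul_of_nonneg_left hPle hβ
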